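/- For every integer n ≥ 1 and τ ∈ ℂ with Im τ > 0, the functions ψ_0, ψ_1, …, ψ_{n−1} form a basis of V^e_n over ℂ: they are linearly independent, and every f ∈ V^e_n is a ℂ-linear combination of ψ_0, …, ψ_{n−1}. In particular dim_ℂ V^e_n = n. -/

import Mathlib

open Complex Real

/-- The term of index `m = a + n·k` in the series defining `ψ_a`:
`exp(πi(m−(n−1)/2)²τ/n + 2πi(m−(n−1)/2)z)`. -/
noncomputable def psiTerm (n : ℕ) (τ : ℂ) (a k : ℤ) (z : ℂ) : ℂ :=
  Complex.exp ((Real.pi : ℂ) * Complex.I *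
      (((a : ℂ) + (n : ℂ) * (k : ℂ)) - ((n : ℂ) - 1) / 2) ^ 2 * τ / (n : ℂ) +
    2 * (Real.pi : ℂ) * Complex.I *
      (((a : ℂ) + (n : ℂ) * (k : ℂ)) - ((n : ℂ) - 1) / 2) * z)

/-- The theta-like basis function
`ψ_a(z) = ∑_{m ≡ a (mod n)} exp(πi(m−(n−1)/2)²τ/n + 2πi(m−(n−1)/2)z)`,
the sum over `m ≡ a (mod n)` being parametrized by `m = a + n·k`, `k ∈ ℤ`. -/
noncomputable def psi (n : ℕ) (τ : ℂ) (a : ℤ) (z : ℂ) : ℂ :=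
  ∑' k : ℤ, psiTerm n τ a k z

/-- Membership in `V^e_n`: entire functions with the two quasi-periodicity
properties `f(z+1) = (−1)^{n−1} f(z)` and `f(z+τ) = e^{−πinτ−2πinz} f(z)`. -/
def MemVe (n : ℕ) (τ : ℂ) (f : ℂ → ℂ) : Prop :=
  Differentiable ℂ f ∧
  (∀ z : ℂ, f (z + 1) = (-1) ^ (n - 1) * f z) ∧
  (∀ z : ℂ, f (z + τ) =
    Complex.exp (-(Real.pi : ℂ) * Complex.I * (n : ℂ) * τ -
      2 * (Real.pi : ℂ) * Complex.I * (n : ℂ) * z) * f z)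

/-- `V^e_n` as a subspace of the space of all functions `ℂ → ℂ`. -/
noncomputable def Ve (n : ℕ) (τ : ℂ) : Submodule ℂ (ℂ → ℂ) where
  carrier := {f | MemVe n τ f}
  add_mem' := by
    rintro f g ⟨hf1, hf2, hf3⟩ ⟨hg1, hg2, hg3⟩
    refine ⟨hf1.add hg1, fun z => ?_, fun z => ?_⟩
    · simp only [Pi.add_apply, hf2 z, hg2 z]; ring
    · simp only [Pi.add_apply, hf3 z, hg3 z]; ring
  zero_mem' := by
    refine ⟨?_, fun z => ?_, fun z => ?_⟩
    · exact differentiable_const (0 : ℂ)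
    · simp
    · simp
  smul_mem' := by
    rintro c f ⟨hf1, hf2, hf3⟩
    refine ⟨hf1.const_smul c, fun z => ?_, fun z => ?_⟩
    · simp only [Pi.smul_apply, smul_eq_mul, hf2 z]; ring
    · simp only [Pi.smul_apply, smul_eq_mul, hf3 z]; ring

noncomputable def thC (n : ℕ) : ℂ := ((n : ℂ) - 1) / 2

lemma psiTerm_eq {n : ℕ} (hn : 0 < n) (τ : ℂ) (a k : ℤ) (z : ℂ) :
    psiTerm n τ a k z = cexp ((π : ℂ) * I * ((a : ℂ) - thC n) ^ 2 * τ / n +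
      2 * π * I * ((a : ℂ) - thC n) * z) *
      jacobiTheta₂_term k (((a : ℂ) - thC n) * τ + n * z) (n * τ) := by
  have hn' : (n : ℂ) ≠ 0 := Nat.cast_ne_zero.mpr hn.ne'
  rw [psiTerm, jacobiTheta₂_term, ← Complex.exp_add]
  congr 1
  simp only [thC]
  field_simp
  ring

lemma summable_psiTerm {n : ℕ} (hn : 0 < n) {τ : ℂ} (hτ : 0 < τ.im) (a : ℤ) (z : ℂ) :
    Summable (fun k : ℤ => psiTerm n τ a k z) := by
  have him : 0 < ((n : ℂ) * τ).im := by
    simp only [Complex.mul_im, Complex.natCast_re, Complex.natCast_im, zero_mul, add_zero]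
    positivity
  have h := (summable_jacobiTheta₂_term_iff (((a : ℂ) - thC n) * τ + n * z) ((n : ℂ) * τ)).mpr him
  have := h.mul_left (cexp ((π : ℂ) * I * ((a : ℂ) - thC n) ^ 2 * τ / n +
      2 * π * I * ((a : ℂ) - thC n) * z))
  exact this.congr fun k => (psiTerm_eq hn τ a k z).symm

lemma hasSum_psiTerm {n : ℕ} (hn : 0 < n) {τ : ℂ} (hτ : 0 < τ.im) (a : ℤ) (z : ℂ) :
    HasSum (fun k : ℤ => psiTerm n τ a k z) (psi n τ a z) :=
  (summable_psiTerm hn hτ a z).hasSum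

lemma psi_eq {n : ℕ} (hn : 0 < n) (τ : ℂ) (a : ℤ) (z : ℂ) :
    psi n τ a z = cexp ((π : ℂ) * I * ((a : ℂ) - thC n) ^ 2 * τ / n +
      2 * π * I * ((a : ℂ) - thC n) * z) *
      jacobiTheta₂ (((a : ℂ) - thC n) * τ + n * z) ((n : ℂ) * τ) := by
  rw [psi, jacobiTheta₂, ← tsum_mul_left]
  exact tsum_congr fun k => psiTerm_eq hn τ a k z

lemma jacobiTheta₂_add_nat (j : ℕ) (z τ : ℂ) :
    jacobiTheta₂ (z + (j : ℂ)) τ = jacobiTheta₂ z τ := by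
  induction j with
  | zero => simp
  | succ m ih => push_cast; rw [← add_assoc, jacobiTheta₂_add_left, ih]

lemma exp_two_pi_mu {n : ℕ} (hn : 1 ≤ n) (a : ℤ) :
    cexp (2 * (π : ℂ) * I * ((a : ℂ) - thC n)) = (-1) ^ (n - 1) := by
  obtain ⟨m, rfl⟩ := Nat.exists_eq_add_of_le hn
  have hm : ((1 + m : ℕ) : ℂ) - 1 = (m : ℂ) := by push_cast; ring
  rw [thC, hm]
  have h1 : 2 * (π : ℂ) * I * ((a : ℂ) - (m : ℂ) / 2) =
      (a : ℤ) * (2 * π * I) + (-((π : ℂ) * I)) * m := by push_cast; ring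
  rw [h1, Complex.exp_add, Complex.exp_int_mul_two_pi_mul_I, one_mul]
  have h2 : (-((π : ℂ) * I)) * m = (m : ℤ) * (-((π : ℂ) * I)) := by push_cast; ring
  rw [h2, Complex.exp_int_mul, Complex.exp_neg, Complex.exp_pi_mul_I]
  norm_num [Nat.add_sub_cancel_left]

lemma im_nat_mul_pos {n : ℕ} (hn : 0 < n) {τ : ℂ} (hτ : 0 < τ.im) :
    0 < ((n : ℂ) * τ).im := by
  simp only [Complex.mul_im, Complex.natCast_re, Complex.natCast_im, zero_mul, add_zero]
  positivity

lemma memVe_psi {n : ℕ} (hn : 1 ≤ n) {τ : ℂ} (hτ : 0 < τ.im) (a : ℤ) :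
    MemVe n τ (psi n τ a) := by
  have hn0 : 0 < n := hn
  have him := im_nat_mul_pos hn0 hτ
  set μ : ℂ := (a : ℂ) - thC n with hμ
  have hpsi : psi n τ a = fun z => cexp ((π : ℂ) * I * μ ^ 2 * τ / n + 2 * π * I * μ * z) *
      jacobiTheta₂ (μ * τ + n * z) ((n : ℂ) * τ) := funext fun z => psi_eq hn0 τ a z
  refine ⟨?_, fun z => ?_, fun z => ?_⟩
  · rw [hpsi]
    refine Differentiable.mul ?_ ?_
    · exact Complex.differentiable_exp.comp (by fun_prop)
    · intro z
      exact (differentiableAt_jacobiTheta₂_fst _ him).comp z (by fun_prop)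
  · rw [hpsi]
    simp only
    have h1 : μ * τ + (n : ℂ) * (z + 1) = (μ * τ + n * z) + (n : ℂ) := by ring
    have h2 : cexp ((π : ℂ) * I * μ ^ 2 * τ / n + 2 * π * I * μ * (z + 1)) =
        cexp (2 * (π : ℂ) * I * μ) * cexp ((π : ℂ) * I * μ ^ 2 * τ / n + 2 * π * I * μ * z) := by
      rw [← Complex.exp_add]; congr 1; ring
    rw [h1, jacobiTheta₂_add_nat, h2, hμ, exp_two_pi_mu hn]
    ring
  · rw [hpsi]
    simp only
    have h1 : μ * τ + (n : ℂ) * (z + τ) = (μ * τ + n * z) + (n : ℂ) * τ := by ring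
    rw [h1, jacobiTheta₂_add_left']
    rw [show ∀ A B C : ℂ, A * (B * C) = (A * B) * C from fun _ _ _ => by ring]
    rw [← Complex.exp_add, ← mul_assoc, ← Complex.exp_add]
    congr 2
    ring

lemma shift_integral_rect {h : ℂ → ℂ} (hd : Differentiable ℂ h)
    (hp : ∀ z, h (z + 1) = h z) (y : ℝ) :
    (∫ x in (0:ℝ)..1, h (x + y * I)) = ∫ x in (0:ℝ)..1, h x := by
  have key := Complex.integral_boundary_rect_eq_zero_of_differentiableOn h 0 (1 + (y : ℂ) * I)
    hd.differentiableOn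
  simp only [Complex.add_re, Complex.one_re, Complex.zero_re, Complex.zero_im, Complex.add_im,
    Complex.one_im, Complex.mul_I_re, Complex.mul_I_im, Complex.ofReal_re, Complex.ofReal_im,
    neg_zero, zero_add, add_zero, Complex.ofReal_zero, zero_mul, Complex.ofReal_one,
    smul_eq_mul] at key
  have hv : (∫ t in (0:ℝ)..y, h (1 + (t:ℂ) * I)) = ∫ t in (0:ℝ)..y, h ((t:ℂ) * I) := by
    refine intervalIntegral.integral_congr fun t _ => ?_
    rw [show (1 : ℂ) + (t:ℂ) * I = ((t:ℂ) * I) + 1 by ring, hp]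
  rw [hv] at key
  linear_combination -key

lemma shift_integral {h : ℂ → ℂ} (hd : Differentiable ℂ h)
    (hp : ∀ z, h (z + 1) = h z) (w : ℂ) :
    (∫ x in (0:ℝ)..1, h (x + w)) = ∫ x in (0:ℝ)..1, h x := by
  have hper : Function.Periodic (fun x : ℝ => h (x + (w.im : ℂ) * I)) 1 := by
    intro x
    simp only
    rw [show ((x + 1 : ℝ) : ℂ) + (w.im : ℂ) * I = ((x : ℂ) + (w.im : ℂ) * I) + 1 by
      push_cast; ring, hp]
  calc (∫ x in (0:ℝ)..1, h (x + w))
      = ∫ x in (0:ℝ)..1, (fun t : ℝ => h (t + (w.im : ℂ) * I)) (x + w.re) := by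
        refine intervalIntegral.integral_congr fun x _ => ?_
        simp only
        rw [show ((x + w.re : ℝ) : ℂ) + (w.im : ℂ) * I = (x : ℂ) + ((w.re : ℂ) + (w.im : ℂ) * I) by
          push_cast; ring, Complex.re_add_im]
    _ = ∫ x in (w.re)..(w.re + 1), h (x + (w.im : ℂ) * I) := by
        rw [intervalIntegral.integral_comp_add_right (fun t : ℝ => h (t + (w.im : ℂ) * I)) w.re,
          zero_add, add_comm 1 w.re]
    _ = ∫ x in (0:ℝ)..(0 + 1), h (x + (w.im : ℂ) * I) := hper.intervalIntegral_add_eq w.re 0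
    _ = ∫ x in (0:ℝ)..1, h x := by rw [zero_add, shift_integral_rect hd hp]

noncomputable def cf (n : ℕ) (f : ℂ → ℂ) (m : ℤ) : ℂ :=
  ∫ x in (0:ℝ)..1, f x * cexp (-(2 * (π : ℂ) * I) * ((m : ℂ) - thC n) * x)

lemma exp_neg_two_pi_mu {n : ℕ} (hn : 1 ≤ n) (a : ℤ) :
    cexp (-(2 * (π : ℂ) * I) * ((a : ℂ) - thC n)) = (-1) ^ (n - 1) := by
  rw [show -(2 * (π : ℂ) * I) * ((a : ℂ) - thC n) = -(2 * (π : ℂ) * I * ((a : ℂ) - thC n)) by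
    ring, Complex.exp_neg, exp_two_pi_mu hn, ← inv_pow]
  norm_num

lemma neg_one_pow_sq (n : ℕ) : ((-1 : ℂ) ^ (n - 1)) * ((-1 : ℂ) ^ (n - 1)) = 1 := by
  rw [← pow_add]
  exact Even.neg_one_pow ⟨n - 1, rfl⟩

/-- The auxiliary integrand `H_m` is 1-periodic. -/
lemma Hm_periodic {n : ℕ} (hn : 1 ≤ n) {τ : ℂ} {f : ℂ → ℂ} (hf : MemVe n τ f) (m : ℤ) (z : ℂ) :
    f (z + 1) * cexp (-(2 * (π : ℂ) * I) * ((m : ℂ) - thC n) * (z + 1)) =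
    f z * cexp (-(2 * (π : ℂ) * I) * ((m : ℂ) - thC n) * z) := by
  rw [hf.2.1 z, show -(2 * (π : ℂ) * I) * ((m : ℂ) - thC n) * (z + 1) =
    -(2 * (π : ℂ) * I) * ((m : ℂ) - thC n) * z + -(2 * (π : ℂ) * I) * ((m : ℂ) - thC n) by ring,
    Complex.exp_add, exp_neg_two_pi_mu hn]
  rw [show ∀ A B : ℂ, (-1 : ℂ) ^ (n-1) * A * (B * (-1 : ℂ)^(n-1)) =
    ((-1 : ℂ)^(n-1) * (-1 : ℂ)^(n-1)) * (A * B) from fun _ _ => by ring, neg_one_pow_sq]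
  ring

lemma Hm_differentiable {n : ℕ} {τ : ℂ} {f : ℂ → ℂ} (hf : MemVe n τ f) (m : ℤ) :
    Differentiable ℂ (fun z => f z * cexp (-(2 * (π : ℂ) * I) * ((m : ℂ) - thC n) * z)) :=
  hf.1.mul (Complex.differentiable_exp.comp (by fun_prop))

/-- The coefficient integral may be computed along any translated segment. -/
lemma cf_shift {n : ℕ} (hn : 1 ≤ n) {τ : ℂ} {f : ℂ → ℂ} (hf : MemVe n τ f) (m : ℤ) (w : ℂ) :
    (∫ x in (0:ℝ)..1, f (x + w) * cexp (-(2 * (π : ℂ) * I) * ((m : ℂ) - thC n) * (x + w)))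
      = cf n f m :=
  shift_integral (Hm_differentiable hf m) (Hm_periodic hn hf m) w

lemma cf_rec {n : ℕ} (hn : 1 ≤ n) {τ : ℂ} {f : ℂ → ℂ} (hf : MemVe n τ f) (m : ℤ) :
    cf n f m = cexp (-((π : ℂ) * I * τ * (2 * m + 1))) * cf n f (m + n) := by
  conv_lhs => rw [← cf_shift hn hf m τ]
  rw [cf, ← intervalIntegral.integral_const_mul]
  refine intervalIntegral.integral_congr fun x _ => ?_
  rw [hf.2.2 x]
  have hE : (-(π : ℂ) * I * n * τ - 2 * π * I * n * x) +
      (-(2 * (π : ℂ) * I) * ((m : ℂ) - thC n) * (x + τ)) =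
      (-((π : ℂ) * I * τ * (2 * m + 1))) +
      (-(2 * (π : ℂ) * I) * (((m + n : ℤ) : ℂ) - thC n) * x) := by
    rw [thC]; push_cast; ring
  calc cexp (-(π : ℂ) * I * n * τ - 2 * π * I * n * x) * f x *
        cexp (-(2 * (π : ℂ) * I) * ((m : ℂ) - thC n) * (x + τ))
      = cexp ((-(π : ℂ) * I * n * τ - 2 * π * I * n * x) +
          (-(2 * (π : ℂ) * I) * ((m : ℂ) - thC n) * (x + τ))) * f x := by
        rw [Complex.exp_add]; ring
    _ = cexp ((-((π : ℂ) * I * τ * (2 * m + 1))) +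
          (-(2 * (π : ℂ) * I) * (((m + n : ℤ) : ℂ) - thC n) * x)) * f x := by rw [hE]
    _ = cexp (-((π : ℂ) * I * τ * (2 * m + 1))) *
          (f x * cexp (-(2 * (π : ℂ) * I) * (((m + n : ℤ) : ℂ) - thC n) * x)) := by
        rw [Complex.exp_add]; ring

lemma cf_rec' {n : ℕ} (hn : 1 ≤ n) {τ : ℂ} {f : ℂ → ℂ} (hf : MemVe n τ f) (m : ℤ) :
    cf n f (m + n) = cexp ((π : ℂ) * I * τ * (2 * m + 1)) * cf n f m := by
  rw [cf_rec hn hf m, ← mul_assoc, ← Complex.exp_add]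
  simp

lemma cf_closed {n : ℕ} (hn : 1 ≤ n) {τ : ℂ} {f : ℂ → ℂ} (hf : MemVe n τ f) (a k : ℤ) :
    cf n f (a + (n : ℤ) * k) =
      cexp ((π : ℂ) * I * τ * ((((a : ℂ) + (n : ℂ) * (k : ℂ)) - thC n) ^ 2 -
        ((a : ℂ) - thC n) ^ 2) / (n : ℂ)) * cf n f a := by
  have hnC : (n : ℂ) ≠ 0 := Nat.cast_ne_zero.mpr (Nat.pos_of_ne_zero (by omega)).ne'
  induction k using Int.induction_on with
  | zero => simp
  | succ k ih =>
    rw [show a + (n : ℤ) * ((k : ℤ) + 1) = (a + (n : ℤ) * k) + n by ring, cf_rec' hn hf, ih,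
      ← mul_assoc, ← Complex.exp_add]
    congr 2
    simp only [thC]
    field_simp
    push_cast
    ring
  | pred k ih =>
    have key := cf_rec' hn hf (a + (n : ℤ) * (-(k : ℤ) - 1))
    rw [show a + (n : ℤ) * (-(k : ℤ) - 1) + n = a + (n : ℤ) * (-(k : ℤ)) by ring, ih] at key
    refine mul_left_cancel₀
      (Complex.exp_ne_zero ((π : ℂ) * I * τ * (2 * ((a + (n : ℤ) * (-(k : ℤ) - 1)) : ℤ) + 1))) ?_
    rw [← key, ← mul_assoc, ← Complex.exp_add]
    congr 2
    simp only [thC]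
    field_simp
    push_cast
    ring

lemma integral_exp_int (j : ℤ) :
    (∫ x in (0:ℝ)..1, cexp (2 * (π : ℂ) * I * (j : ℂ) * (x : ℝ))) =
      if j = 0 then 1 else 0 := by
  rcases eq_or_ne j 0 with rfl | hj
  · simp
  · have hc : 2 * (π : ℂ) * I * (j : ℂ) ≠ 0 := by
      simp [Real.pi_ne_zero, Complex.I_ne_zero, hj]
    rw [if_neg hj]
    rw [integral_exp_mul_complex hc]
    push_cast
    rw [mul_one, mul_zero, Complex.exp_zero,
      show 2 * (π : ℂ) * I * (j : ℂ) = (j : ℂ) * (2 * π * I) by ring,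
      Complex.exp_int_mul_two_pi_mul_I, sub_self, zero_div]

lemma psiTerm_mul_eq {n : ℕ} (hn : 0 < n) (τ : ℂ) (a b k : ℤ) (x : ℝ) :
    psiTerm n τ a k x * cexp (-(2 * (π : ℂ) * I) * ((b : ℂ) - thC n) * x) =
    cexp ((π : ℂ) * I * (((a : ℂ) + (n : ℂ) * (k : ℂ)) - ((n : ℂ) - 1) / 2) ^ 2 * τ / n) *
      cexp (2 * (π : ℂ) * I * ((a + (n : ℤ) * k - b : ℤ) : ℂ) * (x : ℝ)) := by
  rw [psiTerm, ← Complex.exp_add, ← Complex.exp_add]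
  congr 1
  rw [thC]
  push_cast
  ring

lemma norm_exp_two_pi_int_mul (j : ℤ) (x : ℝ) :
    ‖cexp (2 * (π : ℂ) * I * (j : ℂ) * (x : ℝ))‖ = 1 := by
  rw [show 2 * (π : ℂ) * I * (j : ℂ) * (x : ℝ) = ((2 * π * j * x : ℝ) : ℂ) * I by
    push_cast; ring, Complex.norm_exp_ofReal_mul_I]

lemma psiTerm_zero {n : ℕ} (τ : ℂ) (a k : ℤ) :
    psiTerm n τ a k 0 = cexp ((π : ℂ) * I *
      (((a : ℂ) + (n : ℂ) * (k : ℂ)) - ((n : ℂ) - 1) / 2) ^ 2 * τ / n) := by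
  simp [psiTerm]

lemma cf_psi {n : ℕ} (hn : 1 ≤ n) {τ : ℂ} (hτ : 0 < τ.im) (a b : ℤ)
    (ha : 0 ≤ a) (ha' : a < n) (hb : 0 ≤ b) (hb' : b < n) :
    cf n (psi n τ a) b =
      if a = b then cexp ((π : ℂ) * I * ((b : ℂ) - thC n) ^ 2 * τ / n) else 0 := by
  have hn0 : 0 < n := hn
  set K : ℝ → ℂ := fun x => cexp (-(2 * (π : ℂ) * I) * ((b : ℂ) - thC n) * x) with hK
  have hcont : ∀ k : ℤ, Continuous (fun x : ℝ => psiTerm n τ a k x * K x) := by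
    intro k
    unfold K
    unfold psiTerm
    fun_prop
  have hint : ∀ k : ℤ, MeasureTheory.Integrable (fun x : ℝ => psiTerm n τ a k x * K x)
      (MeasureTheory.volume.restrict (Set.Ioc (0:ℝ) 1)) := fun k =>
    ((hcont k).integrableOn_Ioc)
  have hnorm : ∀ (k : ℤ) (x : ℝ), ‖psiTerm n τ a k x * K x‖ = ‖psiTerm n τ a k 0‖ := by
    intro k x
    rw [hK]
    simp only
    rw [psiTerm_mul_eq hn0, norm_mul, norm_exp_two_pi_int_mul, mul_one, psiTerm_zero]
  have hsum : Summable (fun k : ℤ =>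
      ∫ x in Set.Ioc (0:ℝ) 1, ‖psiTerm n τ a k x * K x‖) := by
    have heq : (fun k : ℤ => ∫ x in Set.Ioc (0:ℝ) 1, ‖psiTerm n τ a k x * K x‖) =
        fun k : ℤ => ‖psiTerm n τ a k 0‖ := by
      funext k
      simp_rw [hnorm k]
      simp
    rw [heq]
    exact summable_norm_iff.mpr (summable_psiTerm hn0 hτ a 0)
  have h1 : cf n (psi n τ a) b = ∫ x in Set.Ioc (0:ℝ) 1, ∑' k : ℤ, (psiTerm n τ a k x * K x) := by
    rw [cf, intervalIntegral.integral_of_le zero_le_one]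
    refine MeasureTheory.setIntegral_congr_fun measurableSet_Ioc fun x _ => ?_
    rw [psi, ← tsum_mul_right]
  rw [h1, ← MeasureTheory.integral_tsum_of_summable_integral_norm hint hsum]
  have h3 : ∀ k : ℤ, (∫ x in Set.Ioc (0:ℝ) 1, psiTerm n τ a k x * K x) =
      cexp ((π : ℂ) * I * (((a : ℂ) + (n : ℂ) * (k : ℂ)) - ((n : ℂ) - 1) / 2) ^ 2 * τ / n) *
        (if (a + (n : ℤ) * k - b : ℤ) = 0 then 1 else 0) := by
    intro k
    rw [← intervalIntegral.integral_of_le zero_le_one]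
    have : ∀ x : ℝ, psiTerm n τ a k x * K x =
        cexp ((π : ℂ) * I * (((a : ℂ) + (n : ℂ) * (k : ℂ)) - ((n : ℂ) - 1) / 2) ^ 2 * τ / n) *
          cexp (2 * (π : ℂ) * I * ((a + (n : ℤ) * k - b : ℤ) : ℂ) * (x : ℝ)) := fun x =>
      psiTerm_mul_eq hn0 τ a b k x
    rw [intervalIntegral.integral_congr (fun x _ => this x),
      intervalIntegral.integral_const_mul, integral_exp_int]
  simp_rw [h3]
  have hnz : ((n:ℤ)) ≠ 0 := by exact_mod_cast hn0.ne'
  rcases eq_or_ne a b with rfl | hab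
  · rw [if_pos rfl]
    rw [tsum_eq_single 0 (fun k hk => by
      rw [if_neg, mul_zero]
      intro h
      have h1 : (n:ℤ) * k = 0 := by linarith
      exact hk ((mul_eq_zero.mp h1).resolve_left hnz))]
    simp [thC]
  · rw [if_neg hab]
    have hkey : ∀ k : ℤ, (a + (n : ℤ) * k - b : ℤ) ≠ 0 := by
      intro k h
      rcases eq_or_ne k 0 with rfl | hk
      · rw [mul_zero] at h; omega
      · have h1 : (n:ℤ) * k = b - a := by linarith
        have h2 : (1:ℤ) ≤ |k| := Int.one_le_abs hk
        have h3 : (n:ℤ) ≤ (n:ℤ) * |k| :=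
          le_mul_of_one_le_right (by positivity) h2
        have h4 : |(n:ℤ) * k| = (n:ℤ) * |k| := by
          rw [abs_mul, abs_of_nonneg (by positivity : (0:ℤ) ≤ (n:ℤ))]
        rw [h1] at h4
        have h5 : |b - a| < (n:ℤ) := abs_sub_lt_iff.mpr ⟨by omega, by omega⟩
        linarith
    rw [tsum_congr (fun k => by rw [if_neg (hkey k), mul_zero] :
      ∀ k : ℤ, (cexp ((π : ℂ) * I * (((a : ℂ) + (n : ℂ) * (k : ℂ)) - ((n : ℂ) - 1) / 2) ^ 2 * τ / n) *
        if (a + (n : ℤ) * k - b : ℤ) = 0 then 1 else 0) = 0), tsum_zero]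

lemma psi_continuous {n : ℕ} (hn : 1 ≤ n) {τ : ℂ} (hτ : 0 < τ.im) (a : ℤ) :
    Continuous (psi n τ a) :=
  (memVe_psi hn hτ a).1.continuous

lemma cf_sum {n : ℕ} (hn : 1 ≤ n) {τ : ℂ} (hτ : 0 < τ.im) {N : ℕ} (g : Fin N → ℂ) (b : ℤ) :
    cf n (∑ a : Fin N, g a • psi n τ (a : ℤ)) b =
      ∑ a : Fin N, g a * cf n (psi n τ (a : ℤ)) b := by
  rw [cf]
  have hpt : ∀ x : ℝ, ((∑ a : Fin N, g a • psi n τ (a : ℤ)) (x : ℂ)) *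
      cexp (-(2 * (π : ℂ) * I) * ((b : ℂ) - thC n) * (x : ℝ)) =
      ∑ a : Fin N, g a * (psi n τ (a : ℤ) (x : ℂ) *
        cexp (-(2 * (π : ℂ) * I) * ((b : ℂ) - thC n) * (x : ℝ))) := by
    intro x
    rw [Finset.sum_apply, Finset.sum_mul]
    exact Finset.sum_congr rfl fun a _ => by rw [Pi.smul_apply, smul_eq_mul, mul_assoc]
  rw [intervalIntegral.integral_congr (fun x _ => hpt x),
    intervalIntegral.integral_finset_sum]
  · exact Finset.sum_congr rfl fun a _ => by
      rw [intervalIntegral.integral_const_mul, cf]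
  · intro a _
    refine Continuous.intervalIntegrable ?_ 0 1
    have h1 : Continuous fun x : ℝ => psi n τ (a : ℤ) (x : ℂ) :=
      (psi_continuous hn hτ (a : ℤ)).comp Complex.continuous_ofReal
    fun_prop

lemma cf_zero_fun (n : ℕ) (b : ℤ) : cf n (0 : ℂ → ℂ) b = 0 := by
  simp [cf]

theorem psi_linearIndependent {n : ℕ} (hn : 1 ≤ n) {τ : ℂ} (hτ : 0 < τ.im) :
    LinearIndependent ℂ (fun a : Fin n => psi n τ (a : ℤ)) := by
  rw [Fintype.linearIndependent_iff]
  intro g hg b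
  have hcf : cf n (∑ a : Fin n, g a • psi n τ (a : ℤ)) (b : ℤ) = 0 := by
    rw [hg, cf_zero_fun]
  rw [cf_sum hn hτ] at hcf
  have hterm : ∀ a : Fin n, g a * cf n (psi n τ (a : ℤ)) (b : ℤ) =
      if a = b then g a * cexp ((π : ℂ) * I * (((b : ℤ) : ℂ) - thC n) ^ 2 * τ / n) else 0 := by
    intro a
    rw [cf_psi hn hτ (a : ℤ) (b : ℤ) (by positivity) (by exact_mod_cast a.2)
      (by positivity) (by exact_mod_cast b.2)]
    rcases eq_or_ne a b with rfl | hab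
    · rw [if_pos rfl, if_pos rfl]
    · rw [if_neg (by exact_mod_cast fun h => hab (Fin.ext (by exact_mod_cast h))), if_neg hab,
        mul_zero]
  rw [Finset.sum_congr rfl (fun a _ => hterm a), Finset.sum_ite_eq' Finset.univ b
    (fun a => g a * cexp ((π : ℂ) * I * (((b : ℤ) : ℂ) - thC n) ^ 2 * τ / n)),
    if_pos (Finset.mem_univ b)] at hcf
  exact (mul_eq_zero.mp hcf).resolve_right (Complex.exp_ne_zero _)

/-- The equivalence `Fin n × ℤ ≃ ℤ`, `(a, k) ↦ a + n k`. -/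
def resEquiv (n : ℕ) (hn : 0 < n) : Fin n × ℤ ≃ ℤ where
  toFun p := (p.1 : ℤ) + n * p.2
  invFun m := (⟨(m % n).toNat, by
      have h1 : 0 ≤ m % (n : ℤ) := Int.emod_nonneg m (by exact_mod_cast hn.ne')
      have h2 : m % (n : ℤ) < n := Int.emod_lt_of_pos m (by exact_mod_cast hn)
      omega⟩, m / n)
  left_inv p := by
    obtain ⟨⟨a, ha⟩, k⟩ := p
    have hmod : ((a : ℤ) + n * k) % n = a := by
      rw [Int.add_mul_emod_self_left, Int.emod_eq_of_lt (by positivity) (by exact_mod_cast ha)]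
    have hdiv : ((a : ℤ) + n * k) / n = k := by
      rw [Int.add_mul_ediv_left _ _ (by exact_mod_cast hn.ne' : (n:ℤ) ≠ 0),
        Int.ediv_eq_zero_of_lt (by positivity) (by exact_mod_cast ha), zero_add]
    ext
    · simp [hmod]
    · simp [hdiv]
  right_inv m := by
    simp only
    have h1 : 0 ≤ m % (n : ℤ) := Int.emod_nonneg m (by exact_mod_cast hn.ne')
    rw [Int.toNat_of_nonneg h1]
    rw [add_comm, Int.mul_ediv_add_emod m n]

lemma exp_two_pi_thC {n : ℕ} (hn : 1 ≤ n) :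
    cexp (2 * (π : ℂ) * I * thC n) = (-1) ^ (n - 1) := by
  have h := exp_neg_two_pi_mu hn 0
  rw [show -(2 * (π : ℂ) * I) * (((0:ℤ) : ℂ) - thC n) = 2 * (π : ℂ) * I * thC n by
    push_cast; ring] at h
  exact h

/-- The 1-periodic restriction of `f·e^{2πiθz}` to a horizontal line. -/
noncomputable def gfun (n : ℕ) (f : ℂ → ℂ) (y₀ : ℝ) : ℝ → ℂ :=
  fun x => f ((x : ℂ) + (y₀ : ℂ) * I) * cexp (2 * (π : ℂ) * I * thC n * ((x : ℂ) + (y₀ : ℂ) * I))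

lemma gfun_periodic {n : ℕ} (hn : 1 ≤ n) {τ : ℂ} {f : ℂ → ℂ} (hf : MemVe n τ f) (y₀ : ℝ) :
    Function.Periodic (gfun n f y₀) 1 := by
  intro x
  unfold gfun
  have harg : ((x + 1 : ℝ) : ℂ) + (y₀ : ℂ) * I = ((x : ℂ) + (y₀ : ℂ) * I) + 1 := by
    push_cast; ring
  rw [harg, hf.2.1, show 2 * (π : ℂ) * I * thC n * ((x : ℂ) + (y₀ : ℂ) * I + 1) =
    2 * (π : ℂ) * I * thC n * ((x : ℂ) + (y₀ : ℂ) * I) + 2 * (π : ℂ) * I * thC n by ring,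
    Complex.exp_add, exp_two_pi_thC hn]
  rw [show ∀ A B : ℂ, (-1 : ℂ) ^ (n-1) * A * (B * (-1 : ℂ) ^ (n-1)) =
    ((-1 : ℂ) ^ (n-1) * (-1 : ℂ) ^ (n-1)) * (A * B) from fun _ _ => by ring, neg_one_pow_sq,
    one_mul]

lemma gfun_continuous {n : ℕ} {τ : ℂ} {f : ℂ → ℂ} (hf : MemVe n τ f) (y₀ : ℝ) :
    Continuous (gfun n f y₀) := by
  unfold gfun
  have h1 : Continuous fun x : ℝ => f ((x : ℂ) + (y₀ : ℂ) * I) :=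
    hf.1.continuous.comp (by fun_prop)
  exact h1.mul (Complex.continuous_exp.comp (by fun_prop))

/-- `gfun` as a continuous map on the circle. -/
noncomputable def Gcirc {n : ℕ} {τ : ℂ} {f : ℂ → ℂ} (hn : 1 ≤ n) (hf : MemVe n τ f)
    (y₀ : ℝ) : C(AddCircle (1:ℝ), ℂ) :=
  ⟨(gfun_periodic hn hf y₀).lift, by
    exact Continuous.quotient_liftOn' (gfun_continuous hf y₀) _⟩

lemma Gcirc_coe {n : ℕ} {τ : ℂ} {f : ℂ → ℂ} (hn : 1 ≤ n) (hf : MemVe n τ f)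
    (y₀ : ℝ) (x : ℝ) : Gcirc hn hf y₀ (x : AddCircle (1:ℝ)) = gfun n f y₀ x := rfl

lemma fourierCoeff_Gcirc {n : ℕ} {τ : ℂ} {f : ℂ → ℂ} (hn : 1 ≤ n) (hf : MemVe n τ f)
    (y₀ : ℝ) (m : ℤ) :
    haveI : Fact (0 < (1:ℝ)) := ⟨one_pos⟩
    fourierCoeff (⇑(Gcirc hn hf y₀)) m =
      cf n f m * cexp (2 * (π : ℂ) * I * (m : ℂ) * ((y₀ : ℂ) * I)) := by
  haveI : Fact (0 < (1:ℝ)) := ⟨one_pos⟩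
  rw [fourierCoeff_eq_intervalIntegral _ m 0, zero_add]
  rw [show (1 / (1:ℝ)) = (1:ℝ) by norm_num, one_smul]
  rw [mul_comm (cf n f m), ← cf_shift hn hf m ((y₀ : ℂ) * I),
    ← intervalIntegral.integral_const_mul]
  refine intervalIntegral.integral_congr fun x _ => ?_
  rw [Gcirc_coe, fourier_coe_apply, smul_eq_mul, gfun]
  have hE : (2 * (π : ℂ) * I * (-m : ℤ) * (x : ℝ) / ((1:ℝ) : ℂ)) +
      2 * (π : ℂ) * I * thC n * ((x : ℂ) + (y₀ : ℂ) * I) =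
      (2 * (π : ℂ) * I * (m : ℂ) * ((y₀ : ℂ) * I)) +
      (-(2 * (π : ℂ) * I) * ((m : ℂ) - thC n) * ((x : ℂ) + (y₀ : ℂ) * I)) := by
    push_cast; ring
  calc cexp (2 * (π : ℂ) * I * (-m : ℤ) * (x : ℝ) / ((1:ℝ) : ℂ)) *
        (f ((x : ℂ) + (y₀ : ℂ) * I) *
          cexp (2 * (π : ℂ) * I * thC n * ((x : ℂ) + (y₀ : ℂ) * I)))
      = f ((x : ℂ) + (y₀ : ℂ) * I) * cexp ((2 * (π : ℂ) * I * (-m : ℤ) * (x : ℝ) / ((1:ℝ) : ℂ)) +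
          2 * (π : ℂ) * I * thC n * ((x : ℂ) + (y₀ : ℂ) * I)) := by
        rw [Complex.exp_add]; ring
    _ = f ((x : ℂ) + (y₀ : ℂ) * I) * cexp ((2 * (π : ℂ) * I * (m : ℂ) * ((y₀ : ℂ) * I)) +
          (-(2 * (π : ℂ) * I) * ((m : ℂ) - thC n) * ((x : ℂ) + (y₀ : ℂ) * I))) := by rw [hE]
    _ = cexp (2 * (π : ℂ) * I * (m : ℂ) * ((y₀ : ℂ) * I)) *
          (f ((x : ℂ) + (y₀ : ℂ) * I) *
            cexp (-(2 * (π : ℂ) * I) * ((m : ℂ) - thC n) * ((x : ℂ) + (y₀ : ℂ) * I))) := by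
        rw [Complex.exp_add]; ring

/-- Key identity: terms of the Fourier series of `f` regrouped by residue classes are
multiples of `psiTerm`. -/
lemma D_eq {n : ℕ} (hn : 1 ≤ n) {τ : ℂ} {f : ℂ → ℂ} (hf : MemVe n τ f) (a k : ℤ) (w : ℂ) :
    cf n f (a + (n : ℤ) * k) * cexp (2 * (π : ℂ) * I * (((a + (n : ℤ) * k : ℤ)) : ℂ) * w) =
      (cf n f a * cexp (-((π : ℂ) * I * ((a : ℂ) - thC n) ^ 2 * τ / n))) *
        (cexp (2 * (π : ℂ) * I * thC n * w) * psiTerm n τ a k w) := by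
  have hnC : (n : ℂ) ≠ 0 := Nat.cast_ne_zero.mpr (by omega)
  rw [cf_closed hn hf, psiTerm]
  have hE : ((π : ℂ) * I * τ * ((((a : ℂ) + (n : ℂ) * (k : ℂ)) - thC n) ^ 2 -
        ((a : ℂ) - thC n) ^ 2) / (n : ℂ)) + 2 * (π : ℂ) * I * (((a + (n : ℤ) * k : ℤ)) : ℂ) * w =
      (-((π : ℂ) * I * ((a : ℂ) - thC n) ^ 2 * τ / n)) + (2 * (π : ℂ) * I * thC n * w +
        ((Real.pi : ℂ) * Complex.I *
          (((a : ℂ) + (n : ℂ) * (k : ℂ)) - ((n : ℂ) - 1) / 2) ^ 2 * τ / (n : ℂ) +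
        2 * (Real.pi : ℂ) * Complex.I *
          (((a : ℂ) + (n : ℂ) * (k : ℂ)) - ((n : ℂ) - 1) / 2) * w)) := by
    rw [thC]
    push_cast
    ring
  calc cexp ((π : ℂ) * I * τ * ((((a : ℂ) + (n : ℂ) * (k : ℂ)) - thC n) ^ 2 -
          ((a : ℂ) - thC n) ^ 2) / (n : ℂ)) * cf n f a *
        cexp (2 * (π : ℂ) * I * (((a + (n : ℤ) * k : ℤ)) : ℂ) * w)
      = cf n f a * cexp (((π : ℂ) * I * τ * ((((a : ℂ) + (n : ℂ) * (k : ℂ)) - thC n) ^ 2 -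
          ((a : ℂ) - thC n) ^ 2) / (n : ℂ)) +
          2 * (π : ℂ) * I * (((a + (n : ℤ) * k : ℤ)) : ℂ) * w) := by
        rw [Complex.exp_add]; ring
    _ = cf n f a * cexp ((-((π : ℂ) * I * ((a : ℂ) - thC n) ^ 2 * τ / n)) +
          (2 * (π : ℂ) * I * thC n * w +
          ((Real.pi : ℂ) * Complex.I *
            (((a : ℂ) + (n : ℂ) * (k : ℂ)) - ((n : ℂ) - 1) / 2) ^ 2 * τ / (n : ℂ) +
          2 * (Real.pi : ℂ) * Complex.I *
            (((a : ℂ) + (n : ℂ) * (k : ℂ)) - ((n : ℂ) - 1) / 2) * w))) := by rw [hE]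
    _ = cf n f a * cexp (-((π : ℂ) * I * ((a : ℂ) - thC n) ^ 2 * τ / n)) *
          (cexp (2 * (π : ℂ) * I * thC n * w) *
          cexp ((Real.pi : ℂ) * Complex.I *
            (((a : ℂ) + (n : ℂ) * (k : ℂ)) - ((n : ℂ) - 1) / 2) ^ 2 * τ / (n : ℂ) +
          2 * (Real.pi : ℂ) * Complex.I *
            (((a : ℂ) + (n : ℂ) * (k : ℂ)) - ((n : ℂ) - 1) / 2) * w)) := by
        rw [Complex.exp_add, Complex.exp_add]; ring

lemma summable_D {n : ℕ} (hn : 1 ≤ n) {τ : ℂ} (hτ : 0 < τ.im) {f : ℂ → ℂ}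
    (hf : MemVe n τ f) (w : ℂ) :
    Summable (fun m : ℤ => cf n f m * cexp (2 * (π : ℂ) * I * (m : ℂ) * w)) := by
  have hn0 : 0 < n := hn
  rw [← (resEquiv n hn0).summable_iff, ← summable_norm_iff]
  apply (summable_prod_of_nonneg (fun p => norm_nonneg _)).mpr
  constructor
  · intro a
    have hfib : ∀ k : ℤ, (fun m : ℤ => cf n f m * cexp (2 * (π : ℂ) * I * (m : ℂ) * w))
        ((resEquiv n hn0) (a, k)) =
        ((cf n f (a : ℤ) * cexp (-((π : ℂ) * I * (((a : ℤ) : ℂ) - thC n) ^ 2 * τ / n))) *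
          cexp (2 * (π : ℂ) * I * thC n * w)) * psiTerm n τ (a : ℤ) k w := by
      intro k
      simp only [resEquiv, Equiv.coe_fn_mk]
      rw [D_eq hn hf (a : ℤ) k w]
      ring
    have hs : Summable (fun k : ℤ =>
        ‖((cf n f (a : ℤ) * cexp (-((π : ℂ) * I * (((a : ℤ) : ℂ) - thC n) ^ 2 * τ / n))) *
          cexp (2 * (π : ℂ) * I * thC n * w)) * psiTerm n τ (a : ℤ) k w‖) :=
      summable_norm_iff.mpr ((summable_psiTerm hn0 hτ (a : ℤ) w).mul_left _)
    exact hs.congr fun k => (congrArg norm (hfib k)).symm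
  · exact ⟨_, hasSum_fintype _⟩

/-- Every function in `V^e_n` equals the corresponding linear combination of the `ψ_a`. -/
theorem memVe_expansion {n : ℕ} (hn : 1 ≤ n) {τ : ℂ} (hτ : 0 < τ.im) {f : ℂ → ℂ}
    (hf : MemVe n τ f) (z₀ : ℂ) :
    f z₀ = ∑ a : Fin n, (cf n f (a : ℤ) *
      cexp (-((π : ℂ) * I * (((a : ℤ) : ℂ) - thC n) ^ 2 * τ / n))) * psi n τ (a : ℤ) z₀ := by
  haveI : Fact (0 < (1:ℝ)) := ⟨one_pos⟩
  have hn0 : 0 < n := hn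
  set E : ℂ := cexp (2 * (π : ℂ) * I * thC n * z₀) with hE
  -- Summability of the Fourier coefficients of G
  have hsumG : Summable (fourierCoeff (⇑(Gcirc hn hf z₀.im))) := by
    apply Summable.congr (summable_D hn hτ hf ((z₀.im : ℂ) * I))
    intro m
    rw [fourierCoeff_Gcirc hn hf z₀.im m]
  -- Pointwise convergence of the Fourier series at x₀
  have hps := has_pointwise_sum_fourier_series_of_summable hsumG ((z₀.re : ℝ) : AddCircle (1:ℝ))
  have hGx : (Gcirc hn hf z₀.im) ((z₀.re : ℝ) : AddCircle (1:ℝ)) = f z₀ * E := by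
    rw [Gcirc_coe, gfun, Complex.re_add_im]
  rw [hGx] at hps
  have hterm : (fun m : ℤ => fourierCoeff (⇑(Gcirc hn hf z₀.im)) m •
      fourier m ((z₀.re : ℝ) : AddCircle (1:ℝ))) =
      fun m : ℤ => cf n f m * cexp (2 * (π : ℂ) * I * (m : ℂ) * z₀) := by
    funext m
    rw [fourierCoeff_Gcirc hn hf z₀.im m, smul_eq_mul, fourier_coe_apply, mul_assoc,
      ← Complex.exp_add]
    congr 1
    conv_rhs => rw [← Complex.re_add_im z₀]
    push_cast
    ring
  rw [hterm] at hps
  -- Regroup the sum over residue classes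
  have hprod := ((resEquiv n hn0).hasSum_iff).mpr hps
  have hfiber : ∀ a : Fin n, HasSum
      (fun k : ℤ => (fun m : ℤ => cf n f m * cexp (2 * (π : ℂ) * I * (m : ℂ) * z₀))
        ((resEquiv n hn0) (a, k)))
      ((cf n f (a : ℤ) * cexp (-((π : ℂ) * I * (((a : ℤ) : ℂ) - thC n) ^ 2 * τ / n))) *
        (E * psi n τ (a : ℤ) z₀)) := by
    intro a
    have h1 := ((hasSum_psiTerm hn0 hτ (a : ℤ) z₀).mul_left E).mul_left
      (cf n f (a : ℤ) * cexp (-((π : ℂ) * I * (((a : ℤ) : ℂ) - thC n) ^ 2 * τ / n)))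
    have heq : (fun k : ℤ => (cf n f (a : ℤ) *
        cexp (-((π : ℂ) * I * (((a : ℤ) : ℂ) - thC n) ^ 2 * τ / n))) *
          (E * psiTerm n τ (a : ℤ) k z₀)) =
        fun k : ℤ => (fun m : ℤ => cf n f m * cexp (2 * (π : ℂ) * I * (m : ℂ) * z₀))
          ((resEquiv n hn0) (a, k)) := by
      funext k
      simp only [resEquiv, Equiv.coe_fn_mk]
      rw [D_eq hn hf (a : ℤ) k z₀, hE]
    rwa [heq] at h1
  have hsum2 := hprod.prod_fiberwise hfiber
  have hS : f z₀ * E = ∑ a : Fin n,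
      (cf n f (a : ℤ) * cexp (-((π : ℂ) * I * (((a : ℤ) : ℂ) - thC n) ^ 2 * τ / n))) *
        (E * psi n τ (a : ℤ) z₀) := hsum2.unique (hasSum_fintype _)
  have hS2 : f z₀ * E = (∑ a : Fin n,
      (cf n f (a : ℤ) * cexp (-((π : ℂ) * I * (((a : ℤ) : ℂ) - thC n) ^ 2 * τ / n))) *
        psi n τ (a : ℤ) z₀) * E := by
    rw [hS, Finset.sum_mul]
    exact Finset.sum_congr rfl fun a _ => by ring
  exact mul_right_cancel₀ (Complex.exp_ne_zero _) hS2

/-- The functions `ψ_0, …, ψ_{n−1}` form a basis of `V^e_n`: they are linearly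
independent, every `f ∈ V^e_n` is a linear combination of them, and
`dim_ℂ V^e_n = n`. -/
theorem psi_basis_of_Ve (n : ℕ) (hn : 1 ≤ n) (τ : ℂ) (hτ : 0 < τ.im) :
    LinearIndependent ℂ (fun a : Fin n => psi n τ (a : ℤ)) ∧
    (∀ f : ℂ → ℂ, MemVe n τ f →
      ∃ c : Fin n → ℂ, ∀ z : ℂ, f z = ∑ a : Fin n, c a * psi n τ (a : ℤ) z) ∧
    Module.finrank ℂ (Ve n τ) = n := by
  have hli := psi_linearIndependent hn hτ
  have hspanning : ∀ f : ℂ → ℂ, MemVe n τ f →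
      ∃ c : Fin n → ℂ, ∀ z : ℂ, f z = ∑ a : Fin n, c a * psi n τ (a : ℤ) z := by
    intro f hf
    exact ⟨fun a => cf n f (a : ℤ) *
      cexp (-((π : ℂ) * I * (((a : ℤ) : ℂ) - thC n) ^ 2 * τ / n)),
      fun z => memVe_expansion hn hτ hf z⟩
  refine ⟨hli, hspanning, ?_⟩
  have hspan : Ve n τ = Submodule.span ℂ (Set.range fun a : Fin n => psi n τ (a : ℤ)) := by
    apply le_antisymm
    · intro f hf
      obtain ⟨c, hc⟩ := hspanning f hf
      have hfe : f = ∑ a : Fin n, c a • psi n τ (a : ℤ) := by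
        funext z
        rw [hc z]
        simp [Finset.sum_apply]
      rw [hfe]
      exact Submodule.sum_mem _ fun a _ => Submodule.smul_mem _ _
        (Submodule.subset_span ⟨a, rfl⟩)
    · rw [Submodule.span_le]
      rintro _ ⟨a, rfl⟩
      exact memVe_psi hn hτ (a : ℤ)
  rw [hspan, finrank_span_eq_card hli, Fintype.card_fin]
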